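/- Let K be a group and φ : K × K → ℂˣ a normalized 2-cocycle. Then for all k, k', l ∈ K: φ(l, k)·φ(lk, l⁻¹)·φ(l, k')·φ(lk', l⁻¹)·φ(lkl⁻¹, lk'l⁻¹) = φ(k, k')·φ(l, kk')·φ(lkk', l⁻¹). -/

import Mathlib

/-- `φ : K × K → ℂˣ` is a 2-cocycle: `φ(kl, m)·φ(k, l) = φ(k, lm)·φ(l, m)`. -/
def IsTwoCocycle {K : Type*} [Group K] (φ : K → K → ℂˣ) : Prop :=
  ∀ k l m : K, φ (k * l) m * φ k l = φ k (l * m) * φ l m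

/-- `φ` is normalized: `φ(e,k) = φ(k,e) = 1`, `φ(k,k⁻¹) = 1`, `|φ(k,l)| = 1` and
`φ(k⁻¹,l⁻¹) = φ(l,k)⁻¹`. -/
def IsNormalizedCocycle {K : Type*} [Group K] (φ : K → K → ℂˣ) : Prop :=
  (∀ k : K, φ 1 k = 1 ∧ φ k 1 = 1) ∧
  (∀ k : K, φ k k⁻¹ = 1) ∧
  (∀ k l : K, ‖((φ k l : ℂˣ) : ℂ)‖ = 1) ∧
  (∀ k l : K, φ k⁻¹ l⁻¹ = (φ l k)⁻¹)

theorem normalized_cocycle_identity_3 (K : Type*) [Group K] (φ : K → K → ℂˣ)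
    (hφ : IsTwoCocycle φ) (hn : IsNormalizedCocycle φ) (k k' l : K) :
    φ l k * φ (l * k) l⁻¹ * φ l k' * φ (l * k') l⁻¹ * φ (l * k * l⁻¹) (l * k' * l⁻¹)
      = φ k k' * φ l (k * k') * φ (l * k * k') l⁻¹ := by
  have e1 := hφ (l * k * l⁻¹) l k'
  have e2 := hφ (l * k * l⁻¹) (l * k') l⁻¹
  have e3 := hφ l k k'
  have e4 := hφ (l * k) l⁻¹ l
  have hll : φ l⁻¹ l = 1 := by simpa using hn.2.1 l⁻¹
  rw [inv_mul_cancel, (hn.1 (l*k)).2, hll, one_mul] at e4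
  have hs1 : l * k * l⁻¹ * l = l * k := by group
  have hs2 : l * k * l⁻¹ * (l * k') = l * k * k' := by group
  rw [hs1] at e1
  rw [hs2] at e2
  rw [Units.ext_iff] at e1 e2 e3 e4 ⊢
  push_cast at e1 e2 e3 e4 ⊢
  linear_combination (-(φ l k : ℂ) * (φ (l*k) l⁻¹ : ℂ) * (φ l k' : ℂ)) * e2
    + (-(φ l k : ℂ) * (φ (l*k) l⁻¹ : ℂ) * (φ (l*k*k') l⁻¹ : ℂ)) * e1
    + ((φ l k : ℂ) * (φ (l*k*k') l⁻¹ : ℂ) * (φ (l*k) k' : ℂ)) * e4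
    + (φ (l*k*k') l⁻¹ : ℂ) * e3
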